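/- Let T be the unilateral weighted shift on ℓ²(ℕ) with positive weights α_n > 0 for all n ≥ 1 (i.e., T e_n = α_n e_{n+1}). Then T is not a complex symmetric operator. -/

import Mathlib

open ContinuousLinearMap

noncomputable section

def IsConjugation {H : Type*} [NormedAddCommGroup H] [InnerProductSpace ℂ H]
    (C : H → H) : Prop :=
  (∀ x y, C (x + y) = C x + C y) ∧
  (∀ (a : ℂ) (x : H), C (a • x) = (starRingEnd ℂ a) • C x) ∧
  (∀ x, ‖C x‖ = ‖x‖) ∧
  (∀ x, C (C x) = x)

def IsCSO {H : Type*} [NormedAddCommGroup H] [InnerProductSpace ℂ H]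
    [CompleteSpace H] (T : H →L[ℂ] H) : Prop :=
  ∃ C : H → H, IsConjugation C ∧ ∀ x, T x = C (adjoint T (C x))

/-- The space `ℓ²(ℕ)`. -/
abbrev L2 : Type := lp (fun _ : ℕ => ℂ) 2

/-- The standard orthonormal basis vectors of `ℓ²(ℕ)`. -/
def e (n : ℕ) : L2 := lp.single 2 n 1

local notation "⟪" x ", " y "⟫" => @inner ℂ _ _ x y

lemma coord_eq (x : L2) (n : ℕ) : ⟪e n, x⟫ = x n := by
  rw [e, lp.inner_single_left]
  simp [RCLike.inner_apply]

lemma eq_zero_of_coords (x : L2) (h : ∀ n, ⟪e n, x⟫ = 0) : x = 0 := by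
  apply lp.ext
  funext n
  have := h n
  rw [coord_eq] at this
  simpa using this

/-- An irreducible unilateral weighted shift (all weights positive) is not a
complex symmetric operator. -/
theorem irreducible_weighted_shift_not_CSO (α : ℕ → ℝ) (hα : ∀ n, 0 < α n)
    (T : L2 →L[ℂ] L2) (hT : ∀ n, T (e n) = (α n : ℂ) • e (n + 1)) :
    ¬ IsCSO T := by
  rintro ⟨C, ⟨Cadd, Csmul, Cnorm, Cinv⟩, hTC⟩
  -- T* e 0 = 0
  have hTadj : adjoint T (e 0) = 0 := by
    apply eq_zero_of_coords
    intro m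
    rw [coord_eq]
    have : ⟪adjoint T (e 0), e m⟫ = 0 := by
      rw [adjoint_inner_left, hT]
      rw [inner_smul_right, e, e, lp.inner_single_left]
      simp [lp.single_apply]
    have h2 := coord_eq (adjoint T (e 0)) m
    rw [← inner_conj_symm] at this
    rw [← h2]
    exact star_eq_zero.mp this
  -- T is injective
  have hinj : ∀ x : L2, T x = 0 → x = 0 := by
    intro x hx
    apply eq_zero_of_coords
    intro n
    have key : adjoint T (e (n + 1)) = (α n : ℂ) • e n := by
      apply lp.ext
      funext m
      have hc : ((adjoint T (e (n+1))) : ∀ _ : ℕ, ℂ) m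
          = (starRingEnd ℂ) ((α m : ℂ) * ((e (m+1) : ∀ _ : ℕ, ℂ) (n+1))) := by
        rw [← coord_eq, ← inner_conj_symm, adjoint_inner_left, hT, inner_smul_right, coord_eq]
      rw [hc]
      by_cases hmn : m = n
      · subst hmn
        rw [lp.coeFn_smul, Pi.smul_apply]
        simp [e, lp.single_apply_self]
      · have h5 : ((e (m+1) : ∀ _ : ℕ, ℂ)) (n+1) = 0 := by
          rw [e, lp.single_apply_ne]
          omega
        rw [h5, mul_zero, map_zero]
        rw [lp.coeFn_smul, Pi.smul_apply]
        simp [e, lp.single_apply_ne 2 n _ hmn, Pi.single_eq_of_ne hmn]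
    have : ⟪adjoint T (e (n+1)), x⟫ = 0 := by
      rw [adjoint_inner_left, hx, inner_zero_right]
    rw [key, inner_smul_left] at this
    have hα' : (starRingEnd ℂ) ((α n : ℂ)) ≠ 0 := by
      simp [Complex.ext_iff, (hα n).ne']
    exact (mul_eq_zero.mp this).resolve_left hα'
  -- conclude
  have hC0 : C 0 = 0 := by
    have h := Cadd 0 0
    simp only [add_zero] at h
    exact left_eq_add.mp h
  have : T (C (e 0)) = 0 := by
    rw [hTC, Cinv, hTadj, hC0]
  have hCe0 : C (e 0) = 0 := hinj _ this
  have : ‖e 0‖ = 0 := by rw [← Cnorm, hCe0, norm_zero]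
  have hne : ‖e 0‖ = 1 := by
    rw [e]
    have := lp.norm_single (p := 2) (E := fun _ : ℕ => ℂ) (by norm_num) 0 (1:ℂ)
    simpa using this
  rw [hne] at this
  norm_num at this
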